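/- The 4×4 matrix M̂(ξ,λ) = [[λ + iξs, iξR₁(γξ² − β)], [−iξR₁², λ + iξs]] (2×2) is singular if and only if λ = −iξs ± √((γξ² − β)ξ²R₁³). Consequently, if γ < 0 and β > 0 then for every real ξ both roots satisfy Re λ ≤ 0, while if γ > 0 and β > 0 there exists ξ ∈ ℝ with a root λ having Re λ > 0. -/
import Mathlib


open Complex

/-- the 2×2 matrix M̂(ξ,λ) = [[λ+iξs, iξR₁(γξ²−β)], [−iξR₁², λ+iξs]]
is singular iff λ = −iξs ± √((γξ²−β)ξ²R₁³), i.e. iff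
(λ+iξs)² = (γξ²−β)ξ²R₁³. Consequently, if γ < 0 and β > 0 then every root λ
has Re λ ≤ 0, while if γ > 0 and β > 0 there are ξ ∈ ℝ and a root λ with
Re λ > 0. -/
theorem stmt16 (β γ s R₁ : ℝ) (hβ : β ≠ 0) (hγ : γ ≠ 0) (hR₁ : 0 < R₁)
    (M : ℝ → ℂ → Matrix (Fin 2) (Fin 2) ℂ)
    (hM : ∀ (ξ : ℝ) (lam : ℂ), M ξ lam =
      !![lam + (ξ : ℂ) * (s : ℂ) * Complex.I,
          Complex.I * (ξ : ℂ) * (R₁ : ℂ) * ((γ : ℂ) * (ξ : ℂ) ^ 2 - (β : ℂ));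
        -Complex.I * (ξ : ℂ) * (R₁ : ℂ) ^ 2,
          lam + (ξ : ℂ) * (s : ℂ) * Complex.I]) :
    (∀ (ξ : ℝ) (lam : ℂ), (M ξ lam).det = 0 ↔
      (lam + (ξ : ℂ) * (s : ℂ) * Complex.I) ^ 2 =
        (((γ * ξ ^ 2 - β) * ξ ^ 2 * R₁ ^ 3 : ℝ) : ℂ)) ∧
    (γ < 0 → 0 < β → ∀ (ξ : ℝ) (lam : ℂ), (M ξ lam).det = 0 → lam.re ≤ 0) ∧
    (0 < γ → 0 < β → ∃ (ξ : ℝ) (lam : ℂ), (M ξ lam).det = 0 ∧ 0 < lam.re) := by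
  have hdet : ∀ (ξ : ℝ) (lam : ℂ), (M ξ lam).det = 0 ↔
      (lam + (ξ : ℂ) * (s : ℂ) * Complex.I) ^ 2 =
        (((γ * ξ ^ 2 - β) * ξ ^ 2 * R₁ ^ 3 : ℝ) : ℂ) := by
    intro ξ lam
    have key : (M ξ lam).det =
        (lam + (ξ : ℂ) * (s : ℂ) * Complex.I) ^ 2 -
          (((γ * ξ ^ 2 - β) * ξ ^ 2 * R₁ ^ 3 : ℝ) : ℂ) := by
      rw [hM, Matrix.det_fin_two_of]
      push_cast
      linear_combination ((ξ : ℂ) ^ 2 * (R₁ : ℂ) ^ 3 * ((γ : ℂ) * (ξ : ℂ) ^ 2 - (β : ℂ))) *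
        Complex.I_sq
    rw [key, sub_eq_zero]
  refine ⟨hdet, ?_, ?_⟩
  · intro hγ' hβ' ξ lam h
    rw [hdet] at h
    set z : ℂ := lam + (ξ : ℂ) * (s : ℂ) * Complex.I with hz
    have hre : z.re = lam.re := by simp [hz]
    have him : z.re * z.im + z.im * z.re = 0 := by
      have := congrArg Complex.im h
      simpa [pow_two, Complex.mul_im, ← Complex.ofReal_pow] using this
    have hsq : z.re * z.re - z.im * z.im = (γ * ξ ^ 2 - β) * ξ ^ 2 * R₁ ^ 3 := by
      have := congrArg Complex.re h
      simpa [pow_two, Complex.mul_re, ← Complex.ofReal_pow] using this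
    have hc : (γ * ξ ^ 2 - β) * ξ ^ 2 * R₁ ^ 3 ≤ 0 := by
      have h1 : γ * ξ ^ 2 - β < 0 := by nlinarith [sq_nonneg ξ]
      have h2 : (0:ℝ) ≤ ξ ^ 2 * R₁ ^ 3 := by positivity
      calc (γ * ξ ^ 2 - β) * ξ ^ 2 * R₁ ^ 3 = (γ * ξ ^ 2 - β) * (ξ ^ 2 * R₁ ^ 3) := by ring
        _ ≤ 0 := mul_nonpos_of_nonpos_of_nonneg h1.le h2
    have h3 : (z.re * z.im) ^ 2 = 0 := by nlinarith [him]
    have h4 : z.re ^ 2 ≤ z.im ^ 2 := by nlinarith [hsq]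
    have h5 : z.re ^ 2 * z.re ^ 2 ≤ z.re ^ 2 * z.im ^ 2 :=
      mul_le_mul_of_nonneg_left h4 (sq_nonneg _)
    have h6 : z.re ^ 2 = 0 := le_antisymm (by nlinarith) (sq_nonneg _)
    have h7 : z.re = 0 := by
      have := pow_eq_zero_iff (n := 2) (by norm_num) |>.mp h6
      exact this
    rw [← hre, h7]
  · intro hγ' hβ'
    set ξ : ℝ := Real.sqrt (2 * β / γ) with hξ
    have hξ2 : ξ ^ 2 = 2 * β / γ := Real.sq_sqrt (by positivity)
    have hc : 0 < (γ * ξ ^ 2 - β) * ξ ^ 2 * R₁ ^ 3 := by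
      rw [hξ2]
      have h1 : γ * (2 * β / γ) - β = β := by field_simp; ring
      rw [h1]
      positivity
    refine ⟨ξ, ((Real.sqrt ((γ * ξ ^ 2 - β) * ξ ^ 2 * R₁ ^ 3) : ℝ) : ℂ)
        - (ξ : ℂ) * (s : ℂ) * Complex.I, ?_, ?_⟩
    · rw [hdet, sub_add_cancel]
      norm_cast
      rw [Real.sq_sqrt hc.le]
    · have : (((Real.sqrt ((γ * ξ ^ 2 - β) * ξ ^ 2 * R₁ ^ 3) : ℝ) : ℂ)
          - (ξ : ℂ) * (s : ℂ) * Complex.I).re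
          = Real.sqrt ((γ * ξ ^ 2 - β) * ξ ^ 2 * R₁ ^ 3) := by simp
      rw [this]
      exact Real.sqrt_pos.mpr hc
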